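/- Let (G,κ) be a capacitated graph with κ(x) = 1 ≤ d_G(x) for all x ∈ V(G). Let X = {x : d_G(x) = 1}, Y = N(X), Z = V(G) \ (X ∪ Y). Then all DP-Nash subgraphs of (G,κ) have the same D-set if and only if X ∪ Z is independent in G and |N_G(y) ∩ X| ≥ 2 for every y ∈ Y. -/

import Mathlib

open Finset
open scoped Classical

noncomputable section

variable {V : Type*} [Fintype V]

/-- Degree of a vertex in a (simple) graph on a finite vertex set. -/
def deg (H : SimpleGraph V) (x : V) : ℕ :=
  (Finset.univ.filter fun y => H.Adj x y).card

/-- `(D, P; H)` is a DP-Nash subgraph of the capacitated graph `(G, κ)`: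
`H` is a spanning subgraph of `G`, bipartite with partite sets `D` and `P`,
no vertex of `P` is isolated in `H`, and every `x ∈ D` has
`H`-degree `min (d_G x) (κ x)`. -/
def IsDPNash (G : SimpleGraph V) (κ : V → ℕ) (D P : Finset V) (H : SimpleGraph V) : Prop :=
  H ≤ G ∧ D ∪ P = Finset.univ ∧ Disjoint D P ∧
    (∀ ⦃u v⦄, H.Adj u v → (u ∈ D ∧ v ∈ P) ∨ (u ∈ P ∧ v ∈ D)) ∧
    (∀ v ∈ P, 0 < deg H v) ∧
    (∀ x ∈ D, deg H x = min (deg G x) (κ x))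

/-- `X = {x : κ(x) = d_G(x)}`. -/
def XX (G : SimpleGraph V) (κ : V → ℕ) : Finset V :=
  Finset.univ.filter fun x => κ x = deg G x

/-- `Y = N(X) \ X`. -/
def YY (G : SimpleGraph V) (κ : V → ℕ) : Finset V :=
  Finset.univ.filter fun y => y ∉ XX G κ ∧ ∃ x ∈ XX G κ, G.Adj x y

/-- `Z = V \ (X ∪ Y)`. -/
def ZZ (G : SimpleGraph V) (κ : V → ℕ) : Finset V :=
  Finset.univ \ (XX G κ ∪ YY G κ)

/-- `Y^{κ>0} = {y ∈ Y : κ(y) > 0}`. -/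
def Ypos (G : SimpleGraph V) (κ : V → ℕ) : Finset V :=
  (YY G κ).filter fun y => 0 < κ y

/-- The neighbours of `x` in `G` lying in `W`. -/
def nbrW (G : SimpleGraph V) (x : V) (W : Finset V) : Finset V :=
  Finset.univ.filter fun y => G.Adj x y ∧ y ∈ W

/-- `L(W) = {x ∈ X ∪ Z : |N_G(x) ∩ W| > d_G(x) - κ(x)}`. -/
def LL (G : SimpleGraph V) (κ : V → ℕ) (W : Finset V) : Finset V :=
  (XX G κ ∪ ZZ G κ).filter fun x => deg G x - κ x < (nbrW G x W).card

/-- The set of vertices of degree `1` (for the capacity function `κ ≡ 1`). -/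
def X1 (G : SimpleGraph V) : Finset V := Finset.univ.filter fun x => deg G x = 1

/-- `Y = N(X)` for the case `κ ≡ 1`. -/
def Y1 (G : SimpleGraph V) : Finset V :=
  Finset.univ.filter fun y => ∃ x ∈ X1 G, G.Adj x y

/-- `Z = V \ (X ∪ Y)` for the case `κ ≡ 1`. -/
def Z1 (G : SimpleGraph V) : Finset V := Finset.univ \ (X1 G ∪ Y1 G)

set_option linter.unusedSectionVars false

lemma exists_adj (G : SimpleGraph V) {v : V} (h : 1 ≤ deg G v) : ∃ w, G.Adj v w := by
  obtain ⟨w, hw⟩ := Finset.card_pos.mp h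
  exact ⟨w, (Finset.mem_filter.mp hw).2⟩

lemma deg_one_unique (G : SimpleGraph V) {x a b : V} (h : deg G x = 1)
    (ha : G.Adj x a) (hb : G.Adj x b) : a = b := by
  have := Finset.card_le_one.mp (le_of_eq h)
  exact this a (Finset.mem_filter.mpr ⟨Finset.mem_univ _, ha⟩)
    b (Finset.mem_filter.mpr ⟨Finset.mem_univ _, hb⟩)

lemma two_le_deg (G : SimpleGraph V) {x a b : V} (ha : G.Adj x a) (hb : G.Adj x b)
    (hab : a ≠ b) : 2 ≤ deg G x := by
  apply Finset.one_lt_card.mpr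
  exact ⟨a, Finset.mem_filter.mpr ⟨Finset.mem_univ _, ha⟩,
    b, Finset.mem_filter.mpr ⟨Finset.mem_univ _, hb⟩, hab⟩

/-- Spanning star forest data on a vertex set `W`. -/
def SF (G : SimpleGraph V) (W D P : Finset V) (f : V → V) : Prop :=
  D ∪ P = W ∧ Disjoint D P ∧ (∀ d ∈ D, f d ∈ P ∧ G.Adj d (f d)) ∧
    ∀ p ∈ P, ∃ d ∈ D, f d = p

lemma SF.step (G : SimpleGraph V) {W Lv : Finset V} {c : V}
    (hLW : Lv ⊆ W) (hcW : c ∈ W) (hcLv : c ∉ Lv) (hne : Lv.Nonempty)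
    (hadj : ∀ a ∈ Lv, G.Adj a c)
    {D P : Finset V} {f : V → V} (h : SF G (W \ insert c Lv) D P f) :
    SF G W (Lv ∪ D) (insert c P) (fun x => if x ∈ Lv then c else f x) := by
  obtain ⟨hDP, hdisj, hf, hcov⟩ := h
  have hDW : D ⊆ W \ insert c Lv := hDP ▸ Finset.subset_union_left
  have hPW : P ⊆ W \ insert c Lv := hDP ▸ Finset.subset_union_right
  refine ⟨?_, ?_, ?_, ?_⟩
  · ext x
    simp only [Finset.mem_union, Finset.mem_insert]
    constructor
    · rintro ((hx | hx) | hx | hx)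
      · exact hLW hx
      · exact (Finset.mem_sdiff.mp (hDW hx)).1
      · exact hx ▸ hcW
      · exact (Finset.mem_sdiff.mp (hPW hx)).1
    · intro hx
      by_cases h1 : x ∈ Lv
      · exact Or.inl (Or.inl h1)
      by_cases h2 : x = c
      · exact Or.inr (Or.inl h2)
      have : x ∈ W \ insert c Lv := Finset.mem_sdiff.mpr ⟨hx, by
        simp only [Finset.mem_insert]; tauto⟩
      rw [← hDP] at this
      rcases Finset.mem_union.mp this with h' | h'
      · exact Or.inl (Or.inr h')
      · exact Or.inr (Or.inr h')
  · rw [Finset.disjoint_union_left]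
    constructor
    · rw [Finset.disjoint_insert_right]
      exact ⟨hcLv, Finset.disjoint_left.mpr fun a ha hP =>
        (Finset.mem_sdiff.mp (hPW hP)).2 (Finset.mem_insert.mpr (Or.inr ha))⟩
    · rw [Finset.disjoint_insert_right]
      exact ⟨fun hc => (Finset.mem_sdiff.mp (hDW hc)).2 (Finset.mem_insert_self _ _), hdisj⟩
  · intro d hd
    rcases Finset.mem_union.mp hd with hd | hd
    · simp only [if_pos hd]
      exact ⟨Finset.mem_insert_self _ _, hadj d hd⟩
    · have hdL : d ∉ Lv := fun hdl =>
        (Finset.mem_sdiff.mp (hDW hd)).2 (Finset.mem_insert.mpr (Or.inr hdl))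
      simp only [if_neg hdL]
      exact ⟨Finset.mem_insert.mpr (Or.inr (hf d hd).1), (hf d hd).2⟩
  · intro p hp
    rcases Finset.mem_insert.mp hp with rfl | hp
    · obtain ⟨a, ha⟩ := hne
      exact ⟨a, Finset.mem_union_left _ ha, by simp [ha]⟩
    · obtain ⟨d, hd, hfd⟩ := hcov p hp
      have hdL : d ∉ Lv := fun hdl =>
        (Finset.mem_sdiff.mp (hDW hd)).2 (Finset.mem_insert.mpr (Or.inr hdl))
      exact ⟨d, Finset.mem_union_right _ hd, by simp [hdL, hfd]⟩

lemma SF.exists_aux (G : SimpleGraph V) :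
    ∀ (n : ℕ) (W : Finset V), W.card ≤ n → (∀ w ∈ W, ∃ t ∈ W, G.Adj w t) →
      ∃ D P f, SF G W D P f := by
  intro n
  induction n with
  | zero =>
    intro W hcard _
    have : W = ∅ := Finset.card_eq_zero.mp (Nat.le_zero.mp hcard)
    exact ⟨∅, ∅, id, by simp [SF, this]⟩
  | succ n ih =>
    intro W hcard hW
    rcases W.eq_empty_or_nonempty with rfl | ⟨w, hw⟩
    · exact ⟨∅, ∅, id, by simp [SF]⟩
    set Lp : Finset V := W.filter (fun a => a ≠ w ∧ ∀ b ∈ W, G.Adj a b → b = w) with hLp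
    have hLp_adj : ∀ a ∈ Lp, G.Adj a w := by
      intro a ha
      obtain ⟨haW, _, hall⟩ := Finset.mem_filter.mp ha
      obtain ⟨t, htW, hat⟩ := hW a haW
      exact (hall t htW hat) ▸ hat
    by_cases hLpne : Lp.Nonempty
    · -- star centered at w with leaves Lp
      have hsub : Lp ⊆ W := Finset.filter_subset _ _
      have hwLp : w ∉ Lp := fun h => ((Finset.mem_filter.mp h).2.1 rfl)
      set W' := W \ insert w Lp with hW'
      have hW'sub : W' ⊆ W := Finset.sdiff_subset
      have hcard' : W'.card ≤ n := by
        have : W'.card < W.card := Finset.card_lt_card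
          (Finset.ssubset_iff_of_subset hW'sub |>.mpr ⟨w, hw, by simp [hW']⟩)
        omega
      have hW'h : ∀ a ∈ W', ∃ t ∈ W', G.Adj a t := by
        intro a ha
        obtain ⟨haW, hains⟩ := Finset.mem_sdiff.mp ha
        simp only [Finset.mem_insert] at hains
        push_neg at hains
        obtain ⟨haw, haLp⟩ := hains
        have : ¬ (a ≠ w ∧ ∀ b ∈ W, G.Adj a b → b = w) := by
          intro hcon; exact haLp (Finset.mem_filter.mpr ⟨haW, hcon⟩)
        push_neg at this
        obtain ⟨b, hbW, hab, hbw⟩ := this haw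
        refine ⟨b, Finset.mem_sdiff.mpr ⟨hbW, ?_⟩, hab⟩
        simp only [Finset.mem_insert]
        push_neg
        refine ⟨hbw, fun hbLp => ?_⟩
        have := (Finset.mem_filter.mp hbLp).2.2 a haW hab.symm
        exact haw this
      obtain ⟨D, P, f, hSF⟩ := ih W' hcard' hW'h
      exact ⟨_, _, _, SF.step G hsub hw hwLp hLpne hLp_adj hSF⟩
    · -- Lp empty; pick neighbour t of w, star centered at t with leaves {w} ∪ Bad
      obtain ⟨t, htW, hwt⟩ := hW w hw
      set Bad : Finset V := W.filter
        (fun a => a ≠ w ∧ a ≠ t ∧ ∀ b ∈ W, G.Adj a b → b = w ∨ b = t) with hBad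
      have hnotLp : ∀ a ∈ W, a ≠ w → ∃ b ∈ W, G.Adj a b ∧ b ≠ w := by
        intro a haW haw
        have : a ∉ Lp := fun h => hLpne ⟨a, h⟩
        have : ¬ (a ≠ w ∧ ∀ b ∈ W, G.Adj a b → b = w) := by
          intro hcon; exact this (Finset.mem_filter.mpr ⟨haW, hcon⟩)
        push_neg at this
        exact this haw
      have hBad_adj : ∀ a ∈ insert w Bad, G.Adj a t := by
        intro a ha
        rcases Finset.mem_insert.mp ha with rfl | ha
        · exact hwt
        · obtain ⟨haW, haw, hat, hall⟩ := Finset.mem_filter.mp ha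
          obtain ⟨b, hbW, hab, hbw⟩ := hnotLp a haW haw
          rcases hall b hbW hab with rfl | rfl
          · exact absurd rfl hbw
          · exact hab
      have hsub : insert w Bad ⊆ W := by
        intro a ha
        rcases Finset.mem_insert.mp ha with rfl | ha
        · exact hw
        · exact Finset.filter_subset _ _ ha
      have htnot : t ∉ insert w Bad := by
        simp only [Finset.mem_insert]
        push_neg
        exact ⟨fun h => G.irrefl (h ▸ hwt), fun h => (Finset.mem_filter.mp h).2.2.1 rfl⟩
      set W' := W \ insert t (insert w Bad) with hW'
      have hW'sub : W' ⊆ W := Finset.sdiff_subset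
      have hcard' : W'.card ≤ n := by
        have : W'.card < W.card := Finset.card_lt_card
          (Finset.ssubset_iff_of_subset hW'sub |>.mpr ⟨t, htW, by simp [hW']⟩)
        omega
      have hW'h : ∀ a ∈ W', ∃ s ∈ W', G.Adj a s := by
        intro a ha
        obtain ⟨haW, hains⟩ := Finset.mem_sdiff.mp ha
        simp only [Finset.mem_insert] at hains
        push_neg at hains
        obtain ⟨hat, haw, haBad⟩ := hains
        have : ¬ (a ≠ w ∧ a ≠ t ∧ ∀ b ∈ W, G.Adj a b → b = w ∨ b = t) := by
          intro hcon; exact haBad (Finset.mem_filter.mpr ⟨haW, hcon⟩)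
        push_neg at this
        obtain ⟨b, hbW, hab, hbwt⟩ := this haw hat
        refine ⟨b, Finset.mem_sdiff.mpr ⟨hbW, ?_⟩, hab⟩
        simp only [Finset.mem_insert]
        push_neg
        refine ⟨hbwt.2, hbwt.1, fun hbBad => ?_⟩
        rcases (Finset.mem_filter.mp hbBad).2.2.2 a haW hab.symm with rfl | rfl
        · exact haw rfl
        · exact hat rfl
      obtain ⟨D, P, f, hSF⟩ := ih W' hcard' hW'h
      exact ⟨_, _, _, SF.step G hsub htW htnot ⟨w, Finset.mem_insert_self _ _⟩ hBad_adj hSF⟩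

lemma SF.exists (G : SimpleGraph V) (W : Finset V)
    (hW : ∀ w ∈ W, ∃ t ∈ W, G.Adj w t) : ∃ D P f, SF G W D P f :=
  SF.exists_aux G W.card W le_rfl hW

/-- The star-forest graph determined by `(D, f)`. -/
def HH (D : Finset V) (f : V → V) : SimpleGraph V where
  Adj a b := a ≠ b ∧ ((a ∈ D ∧ b = f a) ∨ (b ∈ D ∧ a = f b))
  symm := by constructor; intro a b ⟨h1, h2⟩; exact ⟨h1.symm, h2.symm⟩
  loopless := by constructor; intro a ⟨h1, _⟩; exact h1 rfl

lemma SF.isDPNash (G : SimpleGraph V) (hdeg : ∀ v, 1 ≤ deg G v)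
    {D P : Finset V} {f : V → V} (h : SF G Finset.univ D P f) :
    IsDPNash G (fun _ => 1) D P (HH D f) := by
  obtain ⟨hDP, hdisj, hf, hcov⟩ := h
  have hne : ∀ d ∈ D, d ≠ f d := by
    intro d hd h'
    exact (Finset.disjoint_left.mp hdisj hd) (h' ▸ (hf d hd).1)
  refine ⟨?_, hDP, hdisj, ?_, ?_, ?_⟩
  · intro a b hab
    obtain ⟨h1, h2 | h2⟩ := hab
    · exact h2.2 ▸ (hf a h2.1).2
    · exact h2.2 ▸ ((hf b h2.1).2).symm
  · intro u v huv
    obtain ⟨h1, h2 | h2⟩ := huv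
    · exact Or.inl ⟨h2.1, h2.2 ▸ (hf u h2.1).1⟩
    · exact Or.inr ⟨h2.2 ▸ (hf v h2.1).1, h2.1⟩
  · intro p hp
    obtain ⟨d, hd, hfd⟩ := hcov p hp
    have : d ∈ Finset.univ.filter (fun y => (HH D f).Adj p y) := by
      refine Finset.mem_filter.mpr ⟨Finset.mem_univ _, ?_, Or.inr ⟨hd, hfd.symm⟩⟩
      intro h'
      exact (Finset.disjoint_left.mp hdisj hd) (h' ▸ hp)
    exact Finset.card_pos.mpr ⟨d, this⟩
  · intro x hx
    have : Finset.univ.filter (fun y => (HH D f).Adj x y) = {f x} := by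
      ext y
      simp only [Finset.mem_filter, Finset.mem_univ, true_and, Finset.mem_singleton]
      constructor
      · rintro ⟨h1, ⟨_, h2⟩ | ⟨hyD, h2⟩⟩
        · exact h2
        · exact absurd (h2 ▸ (hf y hyD).1) (Finset.disjoint_left.mp hdisj hx)
      · rintro rfl
        exact ⟨hne x hx, Or.inl ⟨hx, rfl⟩⟩
    rw [deg, this, Finset.card_singleton]
    exact (Nat.min_eq_right (hdeg x)).symm

lemma mem_X1 {G : SimpleGraph V} {x : V} : x ∈ X1 G ↔ deg G x = 1 := by simp [X1]
lemma mem_Y1 {G : SimpleGraph V} {y : V} :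
    y ∈ Y1 G ↔ ∃ x, deg G x = 1 ∧ G.Adj x y := by simp [Y1, X1]
lemma mem_XZ {G : SimpleGraph V} {u : V} : u ∈ X1 G ∪ Z1 G ↔ u ∈ X1 G ∨ u ∉ Y1 G := by
  simp only [Finset.mem_union, Z1, Finset.mem_sdiff, Finset.mem_univ, true_and,
    Finset.mem_union]
  tauto

/-- Under independence of `X ∪ Z`, every neighbour of a vertex of `X ∪ Z`
lies in `Y` (and outside `X ∪ Z`). -/
lemma nbr_in_Y (G : SimpleGraph V)
    (hind : ∀ u ∈ X1 G ∪ Z1 G, ∀ v ∈ X1 G ∪ Z1 G, ¬ G.Adj u v)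
    {u c : V} (hu : u ∈ X1 G ∪ Z1 G) (hc : G.Adj u c) :
    c ∈ Y1 G ∧ c ∉ X1 G ∪ Z1 G := by
  have hcXZ : c ∉ X1 G ∪ Z1 G := fun hcu => hind u hu c hcu hc
  refine ⟨?_, hcXZ⟩
  by_contra hcY
  exact hcXZ (mem_XZ.mpr (Or.inr hcY))

lemma uniq_D (G : SimpleGraph V) (hdeg : ∀ v, 1 ≤ deg G v)
    (hind : ∀ u ∈ X1 G ∪ Z1 G, ∀ v ∈ X1 G ∪ Z1 G, ¬ G.Adj u v)
    (h2 : ∀ y ∈ Y1 G, 2 ≤ (nbrW G y (X1 G)).card)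
    {D P : Finset V} {H : SimpleGraph V} (h : IsDPNash G (fun _ => 1) D P H) :
    D = X1 G ∪ Z1 G := by
  obtain ⟨hle, hcov, hdisj, hbip, hP, hD⟩ := h
  have hmem : ∀ v : V, v ∈ D ∨ v ∈ P := by
    intro v
    have : v ∈ D ∪ P := hcov ▸ Finset.mem_univ v
    exact Finset.mem_union.mp this
  -- Y ⊆ P
  have hYP : ∀ y ∈ Y1 G, y ∈ P := by
    intro y hy
    rcases hmem y with hyD | hyP
    · exfalso
      obtain ⟨x₁, hx₁, x₂, hx₂, hx12⟩ := Finset.one_lt_card.mp (h2 y hy)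
      obtain ⟨hadj₁, hX₁⟩ := (Finset.mem_filter.mp hx₁).2
      obtain ⟨hadj₂, hX₂⟩ := (Finset.mem_filter.mp hx₂).2
      have key : ∀ x, G.Adj y x → x ∈ X1 G → H.Adj y x := by
        intro x hadj hX
        have hdx : deg G x = 1 := mem_X1.mp hX
        rcases hmem x with hxD | hxP
        · exfalso
          have h1 : deg H x = 1 := by
            have h := hD x hxD
            simp [hdx] at h
            exact h
          obtain ⟨w, hw⟩ := exists_adj H (le_of_eq h1.symm)
          have : w = y := deg_one_unique G hdx (hle hw) hadj.symm
          subst this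
          rcases hbip hw with ⟨_, hyP'⟩ | ⟨hxP', _⟩
          · exact (Finset.disjoint_left.mp hdisj hyD) hyP'
          · exact (Finset.disjoint_left.mp hdisj hxD) hxP'
        · obtain ⟨w, hw⟩ := exists_adj H (hP x hxP)
          have : w = y := deg_one_unique G hdx (hle hw) hadj.symm
          exact this ▸ hw.symm
      have : 2 ≤ deg H y := two_le_deg H (key x₁ hadj₁ hX₁) (key x₂ hadj₂ hX₂) hx12
      have h1 : deg H y = 1 := by
        have h := hD y hyD
        have h' := hdeg y
        simp at h
        omega
      omega
    · exact hyP
  -- X ∪ Z ⊆ D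
  have hXZD : ∀ u ∈ X1 G ∪ Z1 G, u ∈ D := by
    intro u hu
    rcases hmem u with huD | huP
    · exact huD
    · exfalso
      obtain ⟨w, hw⟩ := exists_adj H (hP u huP)
      have hwY := (nbr_in_Y G hind hu (hle hw)).1
      have hwP := hYP w hwY
      rcases hbip hw with ⟨huD', _⟩ | ⟨_, hwD'⟩
      · exact (Finset.disjoint_left.mp hdisj huD') huP
      · exact (Finset.disjoint_left.mp hdisj hwD') hwP
  apply Finset.Subset.antisymm
  · intro d hd
    by_contra hdXZ
    have hdY : d ∈ Y1 G := by
      by_contra hdY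
      exact hdXZ (mem_XZ.mpr (Or.inr hdY))
    exact (Finset.disjoint_left.mp hdisj hd) (hYP d hdY)
  · intro u hu
    exact hXZD u hu


lemma deg_eq_one_of (G : SimpleGraph V) {a v : V} (h1 : G.Adj a v)
    (h2 : ∀ c, G.Adj a c → c = v) : deg G a = 1 := by
  have : Finset.univ.filter (fun c => G.Adj a c) = {v} := by
    ext c
    simp only [Finset.mem_filter, Finset.mem_univ, true_and, Finset.mem_singleton]
    exact ⟨h2 c, fun h => h ▸ h1⟩
  rw [deg, this, Finset.card_singleton]

lemma caseA (G : SimpleGraph V) (hdeg : ∀ v, 1 ≤ deg G v) {u v : V}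
    (hu : u ∈ X1 G ∪ Z1 G) (hv : v ∈ X1 G ∪ Z1 G) (huv : G.Adj u v) :
    ∃ (D₁ P₁ : Finset V) (H₁ : SimpleGraph V) (D₂ P₂ : Finset V) (H₂ : SimpleGraph V),
      IsDPNash G (fun _ => 1) D₁ P₁ H₁ ∧ IsDPNash G (fun _ => 1) D₂ P₂ H₂ ∧ D₁ ≠ D₂ := by
  classical
  set S : Finset V := Finset.univ.filter
    (fun a => a ≠ u ∧ a ≠ v ∧ ∀ c, G.Adj a c → c = u ∨ c = v) with hS
  have hSmem : ∀ a ∈ S, a ≠ u ∧ a ≠ v ∧ ∀ c, G.Adj a c → c = u ∨ c = v := by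
    intro a ha
    exact (Finset.mem_filter.mp ha).2
  have key : ∀ a ∈ S, G.Adj a u ∧ G.Adj a v := by
    intro a ha
    obtain ⟨hau, hav, hall⟩ := hSmem a ha
    have hadjv : ¬ G.Adj a u → G.Adj a v ∧ ∀ c, G.Adj a c → c = v := by
      intro hnau
      have hall' : ∀ c, G.Adj a c → c = v := by
        intro c hc
        rcases hall c hc with rfl | rfl
        · exact absurd hc hnau
        · rfl
      obtain ⟨w, hw⟩ := exists_adj G (hdeg a)
      have := hall' w hw
      exact ⟨this ▸ hw, hall'⟩
    have hadju : ¬ G.Adj a v → G.Adj a u ∧ ∀ c, G.Adj a c → c = u := by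
      intro hnav
      have hall' : ∀ c, G.Adj a c → c = u := by
        intro c hc
        rcases hall c hc with rfl | rfl
        · rfl
        · exact absurd hc hnav
      obtain ⟨w, hw⟩ := exists_adj G (hdeg a)
      have := hall' w hw
      exact ⟨this ▸ hw, hall'⟩
    constructor
    · by_contra hnau
      obtain ⟨hav', hall'⟩ := hadjv hnau
      have haX : a ∈ X1 G := mem_X1.mpr (deg_eq_one_of G hav' hall')
      have hvY : v ∈ Y1 G := mem_Y1.mpr ⟨a, mem_X1.mp haX, hav'⟩
      have hvX : v ∈ X1 G := by
        rcases mem_XZ.mp hv with h | h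
        · exact h
        · exact absurd hvY h
      have : (2 : ℕ) ≤ deg G v := two_le_deg G huv.symm hav'.symm hau.symm
      have := mem_X1.mp hvX
      omega
    · by_contra hnav
      obtain ⟨hau', hall'⟩ := hadju hnav
      have haX : a ∈ X1 G := mem_X1.mpr (deg_eq_one_of G hau' hall')
      have huY : u ∈ Y1 G := mem_Y1.mpr ⟨a, mem_X1.mp haX, hau'⟩
      have huX : u ∈ X1 G := by
        rcases mem_XZ.mp hu with h | h
        · exact h
        · exact absurd huY h
      have : (2 : ℕ) ≤ deg G u := two_le_deg G huv hau'.symm hav.symm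
      have := mem_X1.mp huX
      omega
  have huS : u ∉ S := fun h => (hSmem u h).1 rfl
  have hvS : v ∉ S := fun h => (hSmem v h).2.1 rfl
  have hvu : v ≠ u := huv.ne'
  set W' : Finset V := Finset.univ \ insert u (insert v S) with hW'
  have hW'h : ∀ a ∈ W', ∃ t ∈ W', G.Adj a t := by
    intro a ha
    have hains := (Finset.mem_sdiff.mp ha).2
    simp only [Finset.mem_insert] at hains
    push_neg at hains
    obtain ⟨hau, hav, haS⟩ := hains
    have : ¬ (a ≠ u ∧ a ≠ v ∧ ∀ c, G.Adj a c → c = u ∨ c = v) := by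
      intro hcon
      exact haS (Finset.mem_filter.mpr ⟨Finset.mem_univ _, hcon⟩)
    push_neg at this
    obtain ⟨b, hab, hbu, hbv⟩ := this hau hav
    refine ⟨b, Finset.mem_sdiff.mpr ⟨Finset.mem_univ _, ?_⟩, hab⟩
    simp only [Finset.mem_insert]
    push_neg
    refine ⟨hbu, hbv, fun hbS => ?_⟩
    rcases (hSmem b hbS).2.2 a hab.symm with rfl | rfl
    · exact hau rfl
    · exact hav rfl
  obtain ⟨D', P', f', hSF⟩ := SF.exists G W' hW'h
  have hucomm : insert u (insert v S) = insert v (insert u S) := by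
    ext a
    simp only [Finset.mem_insert]
    tauto
  have huD' : u ∉ D' := by
    intro h
    have : u ∈ W' := hSF.1 ▸ Finset.mem_union_left _ h
    simp [hW'] at this
  have step1 := SF.step G (Finset.subset_univ (insert v S)) (Finset.mem_univ u)
    (by simp only [Finset.mem_insert]; push_neg; exact ⟨huv.ne, huS⟩)
    ⟨v, Finset.mem_insert_self _ _⟩
    (by
      intro a ha
      rcases Finset.mem_insert.mp ha with rfl | ha
      · exact huv.symm
      · exact (key a ha).1) hSF
  have hSF2 : SF G (Finset.univ \ insert v (insert u S)) D' P' f' := by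
    rwa [← hucomm]
  have step2 := SF.step G (Finset.subset_univ (insert u S)) (Finset.mem_univ v)
    (by simp only [Finset.mem_insert]; push_neg; exact ⟨hvu, hvS⟩)
    ⟨u, Finset.mem_insert_self _ _⟩
    (by
      intro a ha
      rcases Finset.mem_insert.mp ha with rfl | ha
      · exact huv
      · exact (key a ha).2) hSF2
  refine ⟨_, _, _, _, _, _, SF.isDPNash G hdeg step1, SF.isDPNash G hdeg step2, ?_⟩
  intro heq
  have : u ∈ insert v S ∪ D' := heq ▸ Finset.mem_union_left _ (Finset.mem_insert_self _ _)
  rcases Finset.mem_union.mp this with h | h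
  · rcases Finset.mem_insert.mp h with h | h
    · exact huv.ne h
    · exact huS h
  · exact huD' h

lemma caseB (G : SimpleGraph V) (hdeg : ∀ v, 1 ≤ deg G v)
    (hind : ∀ u ∈ X1 G ∪ Z1 G, ∀ v ∈ X1 G ∪ Z1 G, ¬ G.Adj u v)
    {y x : V} (hx : x ∈ X1 G) (hxy : G.Adj x y)
    (huniqx : ∀ x' ∈ X1 G, G.Adj y x' → x' = x) :
    ∃ (D₁ P₁ : Finset V) (H₁ : SimpleGraph V) (D₂ P₂ : Finset V) (H₂ : SimpleGraph V),
      IsDPNash G (fun _ => 1) D₁ P₁ H₁ ∧ IsDPNash G (fun _ => 1) D₂ P₂ H₂ ∧ D₁ ≠ D₂ := by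
  classical
  have hxdeg : deg G x = 1 := mem_X1.mp hx
  have hyY : y ∈ Y1 G := mem_Y1.mpr ⟨x, hxdeg, hxy⟩
  have hyXZ : y ∉ X1 G ∪ Z1 G := by
    intro h
    rcases mem_XZ.mp h with h' | h'
    · exact hind x (Finset.mem_union_left _ hx) y (Finset.mem_union_left _ h') hxy
    · exact h' hyY
  set c : V → V := fun u => Classical.choose (exists_adj G (hdeg u)) with hcdef
  have hc : ∀ u, G.Adj u (c u) := fun u => Classical.choose_spec (exists_adj G (hdeg u))
  have hcX : ∀ a ∈ X1 G, ∀ b, G.Adj a b → b = c a := by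
    intro a ha b hb
    exact deg_one_unique G (mem_X1.mp ha) hb (hc a)
  set c' : V → V := fun u =>
    if h : ∃ d, G.Adj u d ∧ d ≠ y then Classical.choose h else c u with hc'def
  have hc' : ∀ u, deg G u ≠ 1 → G.Adj u (c' u) ∧ c' u ≠ y := by
    intro u hu
    have h2 : 2 ≤ deg G u := by have := hdeg u; omega
    obtain ⟨a, ha, b, hb, hab⟩ := Finset.one_lt_card.mp h2
    have ha' := (Finset.mem_filter.mp ha).2
    have hb' := (Finset.mem_filter.mp hb).2
    have hex : ∃ d, G.Adj u d ∧ d ≠ y := by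
      by_cases h : a = y
      · exact ⟨b, hb', fun hby => hab (h.trans hby.symm)⟩
      · exact ⟨a, ha', h⟩
    simp only [hc'def, dif_pos hex]
    exact Classical.choose_spec hex
  -- first DP-Nash subgraph : D = X ∪ Z
  have hSF1 : SF G Finset.univ (X1 G ∪ Z1 G) (Finset.univ \ (X1 G ∪ Z1 G)) c := by
    refine ⟨Finset.union_sdiff_of_subset (Finset.subset_univ _), Finset.disjoint_sdiff, ?_, ?_⟩
    · intro d hd
      refine ⟨Finset.mem_sdiff.mpr ⟨Finset.mem_univ _, (nbr_in_Y G hind hd (hc d)).2⟩, hc d⟩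
    · intro p hp
      have hpXZ : p ∉ X1 G ∪ Z1 G := (Finset.mem_sdiff.mp hp).2
      have hpY : p ∈ Y1 G := by
        by_contra h
        exact hpXZ (mem_XZ.mpr (Or.inr h))
      obtain ⟨x₀, hx₀, hx₀p⟩ := mem_Y1.mp hpY
      refine ⟨x₀, Finset.mem_union_left _ (mem_X1.mpr hx₀), ?_⟩
      exact (hcX x₀ (mem_X1.mpr hx₀) p hx₀p).symm
  -- second DP-Nash subgraph : D = (X ∪ Z \ {x}) ∪ {y}
  set D₂ : Finset V := insert y ((X1 G ∪ Z1 G).erase x) with hD₂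
  set f₂ : V → V := fun u => if u = y then x else if u ∈ X1 G then c u else c' u with hf₂
  have hxD₂ : x ∉ D₂ := by
    simp only [hD₂, Finset.mem_insert, Finset.mem_erase]
    push_neg
    exact ⟨fun h => G.irrefl (h ▸ hxy), fun h => absurd rfl h⟩
  have hSF2 : SF G Finset.univ D₂ (Finset.univ \ D₂) f₂ := by
    refine ⟨Finset.union_sdiff_of_subset (Finset.subset_univ _), Finset.disjoint_sdiff, ?_, ?_⟩
    · intro d hd
      rcases Finset.mem_insert.mp hd with rfl | hd'
      · have : f₂ d = x := by simp [hf₂]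
        rw [this]
        exact ⟨Finset.mem_sdiff.mpr ⟨Finset.mem_univ _, hxD₂⟩, hxy.symm⟩
      · obtain ⟨hdx, hdXZ⟩ := Finset.mem_erase.mp hd'
        have hdy : d ≠ y := fun h => hyXZ (h ▸ hdXZ)
        by_cases hdX : d ∈ X1 G
        · have hfd : f₂ d = c d := by simp [hf₂, hdy, hdX]
          have hcdy : c d ≠ y := by
            intro h
            have : G.Adj y d := (h ▸ hc d).symm
            exact hdx (huniqx d hdX this)
          have hcdXZ : c d ∉ X1 G ∪ Z1 G := (nbr_in_Y G hind hdXZ (hc d)).2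
          rw [hfd]
          refine ⟨Finset.mem_sdiff.mpr ⟨Finset.mem_univ _, ?_⟩, hc d⟩
          simp only [hD₂, Finset.mem_insert, Finset.mem_erase]
          push_neg
          exact ⟨hcdy, fun _ h => hcdXZ h⟩
        · have hddeg : deg G d ≠ 1 := fun h => hdX (mem_X1.mpr h)
          obtain ⟨hadj', hne'⟩ := hc' d hddeg
          have hfd : f₂ d = c' d := by simp [hf₂, hdy, hdX]
          have hXZ' : c' d ∉ X1 G ∪ Z1 G := (nbr_in_Y G hind hdXZ hadj').2
          rw [hfd]
          refine ⟨Finset.mem_sdiff.mpr ⟨Finset.mem_univ _, ?_⟩, hadj'⟩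
          simp only [hD₂, Finset.mem_insert, Finset.mem_erase]
          push_neg
          exact ⟨hne', fun _ h => hXZ' h⟩
    · intro p hp
      have hpD₂ : p ∉ D₂ := (Finset.mem_sdiff.mp hp).2
      simp only [hD₂, Finset.mem_insert, Finset.mem_erase] at hpD₂
      push_neg at hpD₂
      obtain ⟨hpy, hpe⟩ := hpD₂
      by_cases hpx : p = x
      · refine ⟨y, Finset.mem_insert_self _ _, ?_⟩
        simp [hf₂, hpx]
      · have hpXZ : p ∉ X1 G ∪ Z1 G := fun h => hpx (by_contra fun h' => (hpe h') h)
        have hpY : p ∈ Y1 G := by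
          by_contra h
          exact hpXZ (mem_XZ.mpr (Or.inr h))
        obtain ⟨x₀, hx₀d, hx₀p⟩ := mem_Y1.mp hpY
        have hx₀X : x₀ ∈ X1 G := mem_X1.mpr hx₀d
        have hx₀x : x₀ ≠ x := by
          intro h
          subst h
          exact hpy (deg_one_unique G hx₀d hx₀p hxy)
        have hx₀y : x₀ ≠ y := fun h => hyXZ (Finset.mem_union_left _ (h ▸ hx₀X))
        refine ⟨x₀, Finset.mem_insert.mpr (Or.inr (Finset.mem_erase.mpr
          ⟨hx₀x, Finset.mem_union_left _ hx₀X⟩)), ?_⟩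
        have : f₂ x₀ = c x₀ := by simp [hf₂, hx₀y, hx₀X]
        rw [this]
        exact (hcX x₀ hx₀X p hx₀p).symm
  refine ⟨_, _, _, _, _, _, SF.isDPNash G hdeg hSF1, SF.isDPNash G hdeg hSF2, ?_⟩
  intro heq
  exact hxD₂ (heq ▸ Finset.mem_union_left _ hx)

/-- For `κ ≡ 1`, all DP-Nash subgraphs have the same `D`-set iff `X ∪ Z` is
independent and every `y ∈ Y` has at least two neighbours in `X`. -/
theorem stmt14 (G : SimpleGraph V) (hdeg : ∀ v, 1 ≤ deg G v) :
    (∀ (D₁ P₁ : Finset V) (H₁ : SimpleGraph V) (D₂ P₂ : Finset V) (H₂ : SimpleGraph V),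
        IsDPNash G (fun _ => 1) D₁ P₁ H₁ → IsDPNash G (fun _ => 1) D₂ P₂ H₂ → D₁ = D₂) ↔
      ((∀ u ∈ X1 G ∪ Z1 G, ∀ v ∈ X1 G ∪ Z1 G, ¬ G.Adj u v) ∧
        ∀ y ∈ Y1 G, 2 ≤ (nbrW G y (X1 G)).card) := by
  constructor
  · intro huniq
    have hind : ∀ u ∈ X1 G ∪ Z1 G, ∀ v ∈ X1 G ∪ Z1 G, ¬ G.Adj u v := by
      intro u hu v hv huv
      obtain ⟨D₁, P₁, H₁, D₂, P₂, H₂, h1, h2, hne⟩ := caseA G hdeg hu hv huv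
      exact hne (huniq D₁ P₁ H₁ D₂ P₂ H₂ h1 h2)
    refine ⟨hind, ?_⟩
    intro y hy
    by_contra hlt
    push_neg at hlt
    obtain ⟨x, hxd, hxy⟩ := mem_Y1.mp hy
    have hxX : x ∈ X1 G := mem_X1.mpr hxd
    have hxnbr : x ∈ nbrW G y (X1 G) :=
      Finset.mem_filter.mpr ⟨Finset.mem_univ _, hxy.symm, hxX⟩
    have huniqx : ∀ x' ∈ X1 G, G.Adj y x' → x' = x := by
      intro x' hx' hyx'
      have hx'nbr : x' ∈ nbrW G y (X1 G) :=
        Finset.mem_filter.mpr ⟨Finset.mem_univ _, hyx', hx'⟩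
      exact Finset.card_le_one.mp (by omega) x' hx'nbr x hxnbr
    obtain ⟨D₁, P₁, H₁, D₂, P₂, H₂, h1, h2, hne⟩ := caseB G hdeg hind hxX hxy huniqx
    exact hne (huniq D₁ P₁ H₁ D₂ P₂ H₂ h1 h2)
  · rintro ⟨hind, h2⟩ D₁ P₁ H₁ D₂ P₂ H₂ hdp1 hdp2
    rw [uniq_D G hdeg hind h2 hdp1, uniq_D G hdeg hind h2 hdp2]
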